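/- arXiv:0911.5450 — 2 statements merged into one kernel-verified Lean document; each statement's English description precedes it below -/
import Mathlib

section
/- Let T > 0, let φ : ℝ → ℝ be twice continuously differentiable, ψ : ℝ → ℝ be continuously differentiable, and F : ℝ → ℝ be continuous. If u is a classical solution on [0,T) of ∂²u/∂t² − ∂²u/∂x² = F(u(x,t)) with u(x,0) = φ(x) and ∂u/∂t(x,0) = ψ(x) (that is, u is C² on ℝ × (0,T) and C¹ on ℝ × [0,T)), then u is a mild solution on [0,T): for all (x,t) ∈ ℝ × [0,T), u(x,t) = v(x,t) + (1/2)∫_{Δ(x,t)} F(u(y,s)) dy ds, where v(x,t) = (1/2)∫_{x−t}^{x+t} ψ(y) dy + (1/2)(φ(x+t) + φ(x−t)) and Δ(x,t) = {(y,s) : 0 ≤ s ≤ t, |y−x| ≤ t−s}. -/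
open MeasureTheory Set

/-- The backward light cone (a triangle) of the space-time point `(x,t)`. -/
def lightCone (x t : ℝ) : Set (ℝ × ℝ) :=
  {q : ℝ × ℝ | 0 ≤ q.2 ∧ q.2 ≤ t ∧ |q.1 - x| ≤ t - q.2}

/-- The characteristic coordinates map. -/
noncomputable def chM (p : ℝ × ℝ) : ℝ × ℝ := ((p.1 + p.2) / 2, (p.1 - p.2) / 2)

/-- `chM` as a continuous linear map. -/
noncomputable def chL : ℝ × ℝ →L[ℝ] ℝ × ℝ :=
  (2⁻¹ : ℝ) • ((ContinuousLinearMap.fst ℝ ℝ ℝ + ContinuousLinearMap.snd ℝ ℝ ℝ).prod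
    (ContinuousLinearMap.fst ℝ ℝ ℝ - ContinuousLinearMap.snd ℝ ℝ ℝ))

lemma chL_apply (p : ℝ × ℝ) : chL p = chM p := by
  simp [chL, chM, Prod.smul_mk, smul_eq_mul]
  constructor <;> ring

lemma chL_det : chL.det = -(1/2 : ℝ) := by
  have h : chL.det = LinearMap.det (chL : ℝ × ℝ →ₗ[ℝ] ℝ × ℝ) := rfl
  rw [h, ← LinearMap.det_toMatrix (Module.Basis.finTwoProd ℝ), Matrix.det_fin_two]
  simp [LinearMap.toMatrix_apply, Module.Basis.finTwoProd_zero, Module.Basis.finTwoProd_one, chL]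
  norm_num

/-- a classical solution of `□u = F(u)` on `[0,T)` is a mild solution:
it satisfies the d'Alembert fixed point equation. -/
theorem classical_is_mild
    (T : ℝ) (hT : 0 < T)
    (φ ψ : ℝ → ℝ) (hφ : ContDiff ℝ 2 φ) (hψ : ContDiff ℝ 1 ψ)
    (F : ℝ → ℝ) (hF : Continuous F)
    (u : ℝ → ℝ → ℝ)
    (hu2 : ContDiffOn ℝ 2 (fun q : ℝ × ℝ => u q.1 q.2) (Set.univ ×ˢ Set.Ioo (0 : ℝ) T))
    (hu1 : ContDiffOn ℝ 1 (fun q : ℝ × ℝ => u q.1 q.2) (Set.univ ×ˢ Set.Ico (0 : ℝ) T))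
    (hwave : ∀ x t : ℝ, 0 < t → t < T →
      deriv (deriv (u x)) t - deriv (deriv (fun y => u y t)) x = F (u x t))
    (hinit0 : ∀ x : ℝ, u x 0 = φ x)
    (hinit1 : ∀ x : ℝ, derivWithin (u x) (Set.Ici (0 : ℝ)) 0 = ψ x) :
    ∀ x t : ℝ, 0 ≤ t → t < T →
      u x t = (1 / 2) * (∫ y in (x - t)..(x + t), ψ y)
        + (1 / 2) * (φ (x + t) + φ (x - t))
        + (1 / 2) * (∫ q in lightCone x t, F (u q.1 q.2)) := by
  intro x t ht htT
  -- basic notation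
  set f : ℝ × ℝ → ℝ := fun q => u q.1 q.2 with hf
  set S : Set (ℝ × ℝ) := Set.univ ×ˢ Set.Ico (0 : ℝ) T with hSdef
  set G : ℝ × ℝ → (ℝ × ℝ →L[ℝ] ℝ) := fderivWithin ℝ f S with hGdef
  -- trivial case t = 0
  rcases eq_or_lt_of_le ht with rfl | htpos
  · have hcone : lightCone x 0 = {((x : ℝ), (0 : ℝ))} := by
      ext ⟨y, s⟩
      simp only [lightCone, mem_setOf_eq, mem_singleton_iff, Prod.mk.injEq]
      constructor
      · rintro ⟨h1, h2, h3⟩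
        have hs : s = 0 := le_antisymm h2 h1
        subst hs
        have := abs_nonneg (y - x)
        have : |y - x| = 0 := le_antisymm (by linarith) (abs_nonneg _)
        constructor
        · have := abs_eq_zero.mp this; linarith
        · rfl
      · rintro ⟨rfl, rfl⟩; simp
    rw [hcone]
    have : (volume : Measure (ℝ × ℝ)) {((x : ℝ), (0:ℝ))} = 0 := by
      simpa using measure_singleton (α := ℝ × ℝ) (μ := volume) (x, 0)
    rw [MeasureTheory.Measure.restrict_eq_zero.mpr this]
    simp [hinit0 x]
    ring
  -- main case 0 < t
  set a : ℝ := x - t with hadef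
  set b : ℝ := x + t with hbdef
  have hab : a ≤ b := by simp [hadef, hbdef]; linarith
  have hS : UniqueDiffOn ℝ S := (uniqueDiffOn_univ : UniqueDiffOn ℝ (Set.univ : Set ℝ)).prod (uniqueDiffOn_Ico 0 T)
  have hGcont : ContinuousOn G S := hu1.continuousOn_fderivWithin hS le_rfl
  have hfcont : ContinuousOn f S := hu1.continuousOn
  have hfd : ∀ p ∈ S, HasFDerivWithinAt f (G p) S p := fun p hp =>
    ((hu1.differentiableOn one_ne_zero) p hp).hasFDerivWithinAt
  have hSopen : IsOpen (Set.univ ×ˢ Set.Ioo (0:ℝ) T) := (isOpen_univ : IsOpen (Set.univ : Set ℝ)).prod isOpen_Ioo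
  have hmemS : ∀ p : ℝ × ℝ, p.2 ∈ Set.Ico (0:ℝ) T → p ∈ S := by
    intro p hp; exact ⟨mem_univ _, hp⟩
  have hmemSint : ∀ p : ℝ × ℝ, p.2 ∈ Set.Ioo (0:ℝ) T → p ∈ Set.univ ×ˢ Set.Ioo (0:ℝ) T := by
    intro p hp; exact ⟨mem_univ _, hp⟩
  -- interior identification of G with fderiv
  have hGint : ∀ p : ℝ × ℝ, p.2 ∈ Set.Ioo (0:ℝ) T → G p = fderiv ℝ f p := by
    intro p hp
    refine fderivWithin_of_mem_nhds (Filter.mem_of_superset (hSopen.mem_nhds (hmemSint p hp)) ?_)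
    intro q hq; exact ⟨mem_univ _, ⟨hq.2.1.le, hq.2.2⟩⟩
  -- second order interior facts
  have hfC2 : ∀ p : ℝ × ℝ, p.2 ∈ Set.Ioo (0:ℝ) T → ContDiffAt ℝ 2 f p := fun p hp =>
    hu2.contDiffAt (hSopen.mem_nhds (hmemSint p hp))
  have hDf : ∀ p : ℝ × ℝ, p.2 ∈ Set.Ioo (0:ℝ) T → HasFDerivAt f (fderiv ℝ f p) p :=
    fun p hp => ((hfC2 p hp).differentiableAt (by norm_num)).hasFDerivAt
  have hDDf : ∀ p : ℝ × ℝ, p.2 ∈ Set.Ioo (0:ℝ) T →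
      HasFDerivAt (fderiv ℝ f) (fderiv ℝ (fderiv ℝ f) p) p := fun p hp =>
    (((hfC2 p hp).fderiv_right (m := 1) (by norm_num)).differentiableAt (by norm_num)).hasFDerivAt
  have hf_along : ∀ (c : ℝ → ℝ × ℝ) (v : ℝ × ℝ) (r : ℝ), HasDerivAt c v r →
      (c r).2 ∈ Set.Ioo (0:ℝ) T → HasDerivAt (fun s => f (c s)) (fderiv ℝ f (c r) v) r :=
    fun c v r hc hm => (hDf (c r) hm).comp_hasDerivAt r hc
  have hDf_along : ∀ (c : ℝ → ℝ × ℝ) (v w : ℝ × ℝ) (r : ℝ), HasDerivAt c v r →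
      (c r).2 ∈ Set.Ioo (0:ℝ) T →
      HasDerivAt (fun s => fderiv ℝ f (c s) w) (fderiv ℝ (fderiv ℝ f) (c r) v w) r := by
    intro c v w r hc hm
    have h1 : HasDerivAt (fun s => fderiv ℝ f (c s)) (fderiv ℝ (fderiv ℝ f) (c r) v) r :=
      (hDDf (c r) hm).comp_hasDerivAt r hc
    exact (ContinuousLinearMap.apply ℝ ℝ w).hasFDerivAt.comp_hasDerivAt r h1
  -- pure second derivatives
  have hB22 : ∀ p : ℝ × ℝ, p.2 ∈ Set.Ioo (0:ℝ) T →
      fderiv ℝ (fderiv ℝ f) p (0,1) (0,1) = deriv (deriv (u p.1)) p.2 := by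
    rintro ⟨x₀, t₀⟩ hp
    have hcurve : ∀ s : ℝ, HasDerivAt (fun s : ℝ => ((x₀ : ℝ), s)) ((0:ℝ), (1:ℝ)) s :=
      fun s => (hasDerivAt_const s x₀).prodMk (hasDerivAt_id s)
    have hev : ∀ s ∈ Set.Ioo (0:ℝ) T, deriv (u x₀) s = fderiv ℝ f (x₀, s) (0,1) := by
      intro s hs
      exact HasDerivAt.deriv (hf_along (fun s : ℝ => (x₀, s)) (0,1) s (hcurve s) hs)
    have heq : deriv (u x₀) =ᶠ[nhds t₀] fun s => fderiv ℝ f (x₀, s) (0,1) :=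
      Filter.eventually_of_mem (isOpen_Ioo.mem_nhds hp) hev
    rw [heq.deriv_eq]
    exact (hDf_along (fun s : ℝ => (x₀, s)) (0,1) (0,1) t₀ (hcurve t₀) hp).deriv.symm
  have hB11 : ∀ p : ℝ × ℝ, p.2 ∈ Set.Ioo (0:ℝ) T →
      fderiv ℝ (fderiv ℝ f) p (1,0) (1,0) = deriv (deriv (fun y => u y p.2)) p.1 := by
    rintro ⟨x₀, t₀⟩ hp
    have hcurve : ∀ y : ℝ, HasDerivAt (fun y : ℝ => (y, (t₀ : ℝ))) ((1:ℝ), (0:ℝ)) y :=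
      fun y => (hasDerivAt_id y).prodMk (hasDerivAt_const y t₀)
    have hev : deriv (fun z => u z t₀) = fun y => fderiv ℝ f (y, t₀) (1,0) := by
      funext y
      exact HasDerivAt.deriv (hf_along (fun y : ℝ => (y, t₀)) (1,0) y (hcurve y) hp)
    show fderiv ℝ (fderiv ℝ f) (x₀, t₀) (1,0) (1,0) = deriv (deriv (fun y => u y t₀)) x₀
    rw [show deriv (fun y => u y t₀) = deriv (fun z => u z t₀) from rfl, hev]
    exact (hDf_along (fun y : ℝ => (y, t₀)) (1,0) (1,0) x₀ (hcurve x₀) hp).deriv.symm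
  -- the characteristic mixed derivative
  have hmixed : ∀ p : ℝ × ℝ, p.2 ∈ Set.Ioo (0:ℝ) T →
      fderiv ℝ (fderiv ℝ f) p ((2⁻¹ : ℝ), (-(2⁻¹) : ℝ)) (1,1) = -(2⁻¹) * F (f p) := by
    intro p hp
    have hsym := (hfC2 p hp).isSymmSndFDerivAt (by simp)
    set B := fderiv ℝ (fderiv ℝ f) p with hB
    have h2 : ((1:ℝ),(1:ℝ)) = ((1:ℝ),(0:ℝ)) + ((0:ℝ),(1:ℝ)) := by norm_num
    have hexp : B ((2⁻¹:ℝ), (-(2⁻¹):ℝ)) (1,1)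
        = 2⁻¹ * B (1,0) (1,0) + 2⁻¹ * B (1,0) (0,1)
          - 2⁻¹ * B (0,1) (1,0) - 2⁻¹ * B (0,1) (0,1) := by
      have h1 : ((2⁻¹:ℝ), (-(2⁻¹):ℝ)) = (2⁻¹:ℝ) • ((1:ℝ),(0:ℝ)) - (2⁻¹:ℝ) • ((0:ℝ),(1:ℝ)) := by
        norm_num
      rw [h1, map_sub, _root_.map_smul, _root_.map_smul, ContinuousLinearMap.sub_apply,
        ContinuousLinearMap.smul_apply, ContinuousLinearMap.smul_apply, h2, map_add, map_add]
      simp only [smul_eq_mul]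
      ring
    have hs := hsym ((1:ℝ),(0:ℝ)) ((0:ℝ),(1:ℝ))
    have hw : B (0,1) (0,1) - B (1,0) (1,0) = F (f p) := by
      rw [hB22 p hp, hB11 p hp]
      exact hwave p.1 p.2 hp.1 hp.2
    rw [hexp]
    rw [hs]
    linarith
  have hchMcont : Continuous chM := by unfold chM; fun_prop
  have habt : b - a = 2 * t := by simp [hadef, hbdef]; ring
  have key1 : ∀ ξ ∈ Set.Icc a b, (∫ η in a..ξ, F (f (chM (ξ, η))))
      = 2 * (G (chM (ξ, a)) ((1:ℝ),(1:ℝ))) - 2 * (G (ξ, 0) ((1:ℝ),(1:ℝ))) := by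
    intro ξ hξ
    have hmaps : ∀ η ∈ Set.Icc a ξ, chM (ξ, η) ∈ S := by
      intro η hη
      apply hmemS
      show (ξ - η)/2 ∈ Set.Ico (0:ℝ) T
      constructor
      · have := hη.2; simp; linarith
      · have h1 : ξ - η ≤ b - a := by have := hξ.2; have := hη.1; linarith
        have : (ξ - η)/2 ≤ t := by linarith [habt]
        linarith
    have hcurvecont : Continuous (fun η : ℝ => chM (ξ, η)) :=
      hchMcont.comp (continuous_const.prodMk continuous_id)
    have hc0 : ContinuousOn (fun η : ℝ => G (chM (ξ, η))) (Set.Icc a ξ) :=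
      hGcont.comp hcurvecont.continuousOn hmaps
    have hcont1 : ContinuousOn (fun η : ℝ => -2 * G (chM (ξ, η)) ((1:ℝ),(1:ℝ))) (Set.Icc a ξ) := by
      refine continuousOn_const.mul ?_
      exact ((ContinuousLinearMap.apply ℝ ℝ ((1:ℝ),(1:ℝ))).continuous).comp_continuousOn hc0
    have hderiv : ∀ η ∈ Set.Ioo a ξ, HasDerivWithinAt
        (fun η : ℝ => -2 * G (chM (ξ, η)) ((1:ℝ),(1:ℝ))) (F (f (chM (ξ, η)))) (Set.Ioi η) η := by
      intro η hη
      have hp2 : (chM (ξ, η)).2 ∈ Set.Ioo (0:ℝ) T := by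
        show (ξ - η)/2 ∈ Set.Ioo (0:ℝ) T
        constructor
        · have := hη.2; simp; linarith
        · have h1 : ξ - η < b - a := by have := hξ.2; have := hη.1; linarith
          have : (ξ - η)/2 < t := by linarith [habt]
          linarith
      have hcurve : HasDerivAt (fun η : ℝ => chM (ξ, η)) ((2⁻¹ : ℝ), (-(2⁻¹) : ℝ)) η := by
        have h1 : HasDerivAt (fun η : ℝ => (ξ + η)/2) (2⁻¹ : ℝ) η := by
          have := ((hasDerivAt_id η).const_add ξ).div_const 2
          exact this.congr_deriv (by norm_num)
        have h2 : HasDerivAt (fun η : ℝ => (ξ - η)/2) (-(2⁻¹) : ℝ) η := by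
          have := ((hasDerivAt_id η).const_sub ξ).div_const 2
          exact this.congr_deriv (by norm_num)
        exact h1.prodMk h2
      have hd0 : HasDerivAt (fun η : ℝ => fderiv ℝ f (chM (ξ, η)) ((1:ℝ),(1:ℝ)))
          (fderiv ℝ (fderiv ℝ f) (chM (ξ, η)) ((2⁻¹:ℝ), (-(2⁻¹):ℝ)) ((1:ℝ),(1:ℝ))) η :=
        hDf_along _ _ _ η hcurve hp2
      have hev : (fun η : ℝ => -2 * G (chM (ξ, η)) ((1:ℝ),(1:ℝ)))
          =ᶠ[nhds η] (fun η' : ℝ => -2 * fderiv ℝ f (chM (ξ, η')) ((1:ℝ),(1:ℝ))) := by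
        have hopen : IsOpen {η' : ℝ | (chM (ξ, η')).2 ∈ Set.Ioo (0:ℝ) T} := by
          have hc : Continuous (fun η' : ℝ => (chM (ξ, η')).2) := continuous_snd.comp hcurvecont
          exact isOpen_Ioo.preimage hc
        filter_upwards [hopen.mem_nhds hp2] with η' hη'
        rw [hGint _ hη']
      have hd1 : HasDerivAt (fun η : ℝ => -2 * G (chM (ξ, η)) ((1:ℝ),(1:ℝ)))
          (F (f (chM (ξ, η)))) η := by
        have hd2 := hd0.const_mul (-2 : ℝ)
        rw [hmixed _ hp2] at hd2
        have h' : (-2 : ℝ) * (-(2⁻¹) * F (f (chM (ξ, η)))) = F (f (chM (ξ, η))) := by ring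
        rw [h'] at hd2
        exact hd2.congr_of_eventuallyEq hev
      exact hd1.hasDerivWithinAt
    have hint : IntervalIntegrable (fun η : ℝ => F (f (chM (ξ, η)))) volume a ξ := by
      apply ContinuousOn.intervalIntegrable
      rw [uIcc_of_le hξ.1]
      exact hF.comp_continuousOn (hfcont.comp hcurvecont.continuousOn hmaps)
    have hFTC := intervalIntegral.integral_eq_sub_of_hasDeriv_right_of_le hξ.1 hcont1 hderiv hint
    have hMξξ : chM (ξ, ξ) = ((ξ : ℝ), (0:ℝ)) := by
      simp only [chM]; congr 1 <;> ring
    rw [hMξξ] at hFTC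
    rw [hFTC]
    ring
  -- the outer FTC along the characteristic η = a
  have hmapsb : ∀ ξ ∈ Set.Icc a b, chM (ξ, a) ∈ S := by
    intro ξ hξ
    apply hmemS
    show (ξ - a)/2 ∈ Set.Ico (0:ℝ) T
    constructor
    · have := hξ.1; simp; linarith
    · have h1 : ξ - a ≤ b - a := by have := hξ.2; linarith
      have : (ξ - a)/2 ≤ t := by linarith [habt]
      linarith
  have hcurvebcont : Continuous (fun ξ : ℝ => chM (ξ, a)) :=
    hchMcont.comp (continuous_id.prodMk continuous_const)
  have hintb : IntervalIntegrable (fun ξ : ℝ => 2⁻¹ * (G (chM (ξ, a)) ((1:ℝ),(1:ℝ)))) volume a b := by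
    apply ContinuousOn.intervalIntegrable
    rw [uIcc_of_le hab]
    refine continuousOn_const.mul ?_
    exact ((ContinuousLinearMap.apply ℝ ℝ ((1:ℝ),(1:ℝ))).continuous).comp_continuousOn
      (hGcont.comp hcurvebcont.continuousOn hmapsb)
  have key2 : (∫ ξ in a..b, 2⁻¹ * (G (chM (ξ, a)) ((1:ℝ),(1:ℝ)))) = u x t - φ a := by
    have hcont2 : ContinuousOn (fun ξ : ℝ => f (chM (ξ, a))) (Set.Icc a b) :=
      hfcont.comp hcurvebcont.continuousOn hmapsb
    have hderiv2 : ∀ ξ ∈ Set.Ioo a b, HasDerivWithinAt (fun ξ : ℝ => f (chM (ξ, a)))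
        (2⁻¹ * (G (chM (ξ, a)) ((1:ℝ),(1:ℝ)))) (Set.Ioi ξ) ξ := by
      intro ξ hξ
      have hp2 : (chM (ξ, a)).2 ∈ Set.Ioo (0:ℝ) T := by
        show (ξ - a)/2 ∈ Set.Ioo (0:ℝ) T
        constructor
        · have := hξ.1; simp; linarith
        · have h1 : ξ - a < b - a := by have := hξ.2; linarith
          have : (ξ - a)/2 < t := by linarith [habt]
          linarith
      have hcurve : HasDerivAt (fun ξ : ℝ => chM (ξ, a)) ((2⁻¹ : ℝ), (2⁻¹ : ℝ)) ξ := by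
        have h1 : HasDerivAt (fun ξ : ℝ => (ξ + a)/2) (2⁻¹ : ℝ) ξ := by
          have := ((hasDerivAt_id ξ).add_const a).div_const 2
          exact this.congr_deriv (by norm_num)
        have h2 : HasDerivAt (fun ξ : ℝ => (ξ - a)/2) (2⁻¹ : ℝ) ξ := by
          have := ((hasDerivAt_id ξ).sub_const a).div_const 2
          exact this.congr_deriv (by norm_num)
        exact h1.prodMk h2
      have hd0 : HasDerivAt (fun ξ : ℝ => f (chM (ξ, a)))
          (fderiv ℝ f (chM (ξ, a)) ((2⁻¹:ℝ), (2⁻¹:ℝ))) ξ := hf_along _ _ ξ hcurve hp2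
      have hval : fderiv ℝ f (chM (ξ, a)) ((2⁻¹:ℝ), (2⁻¹:ℝ))
          = 2⁻¹ * (G (chM (ξ, a)) ((1:ℝ),(1:ℝ))) := by
        rw [hGint _ hp2]
        have h1 : ((2⁻¹:ℝ), (2⁻¹:ℝ)) = (2⁻¹:ℝ) • ((1:ℝ),(1:ℝ)) := by
          rw [Prod.smul_mk]; norm_num
        rw [h1, _root_.map_smul, smul_eq_mul]
      rw [hval] at hd0
      exact hd0.hasDerivWithinAt
    have hFTC2 := intervalIntegral.integral_eq_sub_of_hasDeriv_right_of_le hab hcont2 hderiv2 hintb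
    have hMba : chM (b, a) = ((x : ℝ), (t : ℝ)) := by
      simp only [chM, hadef, hbdef]; congr 1 <;> ring
    have hMaa : chM (a, a) = ((a : ℝ), (0:ℝ)) := by
      simp only [chM]; congr 1 <;> ring
    rw [hFTC2, hMba, hMaa]
    show u x t - u a 0 = u x t - φ a
    rw [hinit0]
  -- boundary values of G
  have hGboundary : ∀ ξ : ℝ, G (ξ, 0) ((1:ℝ),(1:ℝ)) = deriv φ ξ + ψ ξ := by
    intro ξ
    have hmem : ((ξ : ℝ), (0:ℝ)) ∈ S := hmemS _ (by constructor <;> simp [hT])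
    have hfdW := hfd _ hmem
    -- horizontal direction
    have hhor : G (ξ, 0) ((1:ℝ),(0:ℝ)) = deriv φ ξ := by
      have hcurve : HasDerivAt (fun y : ℝ => (y, (0:ℝ))) ((1:ℝ),(0:ℝ)) ξ :=
        (hasDerivAt_id ξ).prodMk (hasDerivAt_const ξ 0)
      have hcomp : HasDerivWithinAt (fun y : ℝ => f (y, (0:ℝ)))
          (G (ξ, 0) ((1:ℝ),(0:ℝ))) Set.univ ξ := by
        refine hfdW.comp_hasDerivWithinAt ξ hcurve.hasDerivWithinAt ?_
        intro y _
        exact hmemS _ (by constructor <;> simp [hT])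
      have hφd : HasDerivAt φ (G (ξ, 0) ((1:ℝ),(0:ℝ))) ξ := by
        rw [← hasDerivWithinAt_univ] at *
        refine hcomp.congr (fun y _ => (hinit0 y).symm) (hinit0 ξ).symm
      exact hφd.deriv.symm ▸ rfl
    -- vertical direction
    have hver : G (ξ, 0) ((0:ℝ),(1:ℝ)) = ψ ξ := by
      have hcurve : HasDerivWithinAt (fun s : ℝ => ((ξ : ℝ), s)) ((0:ℝ),(1:ℝ)) (Set.Ico 0 T) 0 :=
        ((hasDerivAt_const (0:ℝ) ξ).prodMk (hasDerivAt_id 0)).hasDerivWithinAt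
      have hcomp : HasDerivWithinAt (fun s : ℝ => f (ξ, s))
          (G (ξ, 0) ((0:ℝ),(1:ℝ))) (Set.Ico 0 T) 0 := by
        refine hfdW.comp_hasDerivWithinAt 0 hcurve ?_
        intro s hs
        exact hmemS _ hs
      have hIci : HasDerivWithinAt (u ξ) (G (ξ, 0) ((0:ℝ),(1:ℝ))) (Set.Ici 0) 0 := by
        refine HasDerivWithinAt.mono_of_mem_nhdsWithin hcomp ?_
        rw [← Set.Ici_inter_Iio]
        exact Filter.inter_mem self_mem_nhdsWithin
          (mem_nhdsWithin_of_mem_nhds (isOpen_Iio.mem_nhds hT))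
      have := hIci.derivWithin (uniqueDiffOn_Ici (0:ℝ) 0 Set.self_mem_Ici)
      rw [← this, hinit1]
    have h11 : ((1:ℝ),(1:ℝ)) = ((1:ℝ),(0:ℝ)) + ((0:ℝ),(1:ℝ)) := by norm_num
    rw [h11, map_add, hhor, hver]
  -- integral of the boundary term
  have hφ' : Continuous (deriv φ) := hφ.continuous_deriv (by norm_num)
  have hφdiff : Differentiable ℝ φ := hφ.differentiable (by norm_num)
  have key3 : (∫ ξ in a..b, (deriv φ ξ + ψ ξ))
      = (φ b - φ a) + ∫ y in a..b, ψ y := by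
    rw [intervalIntegral.integral_add (hφ'.intervalIntegrable a b) (hψ.continuous.intervalIntegrable a b),
      intervalIntegral.integral_deriv_eq_sub (fun y _ => hφdiff y) (hφ'.intervalIntegrable a b)]
  -- combining: the iterated integral
  have key4 : (∫ ξ in a..b, (∫ η in a..ξ, F (f (chM (ξ, η)))))
      = 4 * (u x t - φ a) - 2 * ((φ b - φ a) + ∫ y in a..b, ψ y) := by
    have hcg : ∀ ξ ∈ Set.uIcc a b, (∫ η in a..ξ, F (f (chM (ξ, η))))
        = 4 * (2⁻¹ * (G (chM (ξ, a)) ((1:ℝ),(1:ℝ)))) - 2 * (deriv φ ξ + ψ ξ) := by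
      intro ξ hξ
      rw [uIcc_of_le hab] at hξ
      rw [key1 ξ hξ, hGboundary]
      ring
    rw [intervalIntegral.integral_congr hcg,
      intervalIntegral.integral_sub (g := fun ξ => 2 * (deriv φ ξ + ψ ξ)) ((hintb.const_mul 4)) ((((hφ'.add hψ.continuous).intervalIntegrable a b).const_mul 2 : IntervalIntegrable (fun ξ => 2 * (deriv φ ξ + ψ ξ)) volume a b))]
    have key2' : (∫ ξ in a..b, 4 * (2⁻¹ * (G (chM (ξ, a)) ((1:ℝ),(1:ℝ)))))
        = 4 * (u x t - φ a) := by
      rw [intervalIntegral.integral_const_mul, key2]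
    have key3' : (∫ ξ in a..b, 2 * (deriv φ ξ + ψ ξ))
        = 2 * ((φ b - φ a) + ∫ y in a..b, ψ y) := by
      rw [intervalIntegral.integral_const_mul, key3]
    rw [key2', key3']
  -- the triangle in characteristic coordinates
  set Δ : Set (ℝ × ℝ) := {p : ℝ × ℝ | a ≤ p.2 ∧ p.2 ≤ p.1 ∧ p.1 ≤ b} with hΔdef
  have hΔclosed : IsClosed Δ := by
    have h : Δ = {p : ℝ × ℝ | a ≤ p.2} ∩ ({p : ℝ × ℝ | p.2 ≤ p.1} ∩ {p : ℝ × ℝ | p.1 ≤ b}) := rfl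
    rw [h]
    exact (isClosed_le continuous_const continuous_snd).inter
      ((isClosed_le continuous_snd continuous_fst).inter
        (isClosed_le continuous_fst continuous_const))
  have hΔmeas : MeasurableSet Δ := hΔclosed.measurableSet
  have hΔsub : Δ ⊆ Set.Icc a b ×ˢ Set.Icc a b := by
    rintro ⟨p1, p2⟩ ⟨h1, h2, h3⟩
    exact ⟨⟨le_trans h1 h2, h3⟩, ⟨h1, le_trans h2 h3⟩⟩
  have hΔcomp : IsCompact Δ :=
    (isCompact_Icc.prod isCompact_Icc).of_isClosed_subset hΔclosed hΔsub
  have hΔmapsS : ∀ p ∈ Δ, chM p ∈ S := by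
    rintro ⟨p1, p2⟩ ⟨h1, h2, h3⟩
    apply hmemS
    show (p1 - p2)/2 ∈ Set.Ico (0:ℝ) T
    constructor
    · linarith
    · have h4 : p1 - p2 ≤ b - a := by linarith
      have : (p1 - p2)/2 ≤ t := by linarith [habt]
      linarith
  have hhcont : ContinuousOn (fun p : ℝ × ℝ => F (f (chM p))) Δ :=
    hF.comp_continuousOn (hfcont.comp hchMcont.continuousOn hΔmapsS)
  have hhint : IntegrableOn (fun p : ℝ × ℝ => F (f (chM p))) Δ :=
    hhcont.integrableOn_compact hΔcomp
  have himage : chM '' Δ = lightCone x t := by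
    ext ⟨y, s⟩
    constructor
    · rintro ⟨⟨p1, p2⟩, ⟨h1, h2, h3⟩, heq⟩
      rw [← heq]
      show 0 ≤ (p1 - p2)/2 ∧ (p1 - p2)/2 ≤ t ∧ |(p1 + p2)/2 - x| ≤ t - (p1 - p2)/2
      refine ⟨by linarith, by linarith [habt], ?_⟩
      rw [abs_le]
      have hx1 : x = a + t := by rw [hadef]; ring
      have hx2 : x = b - t := by rw [hbdef]; ring
      constructor
      · rw [hx1]; linarith [habt]
      · rw [hx2]; linarith [habt]
    · rintro ⟨h1, h2, h3⟩
      rw [abs_le] at h3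
      refine ⟨(y + s, y - s),
        ⟨show a ≤ y - s by rw [hadef]; linarith [h3.1],
         show (y:ℝ) - s ≤ y + s by linarith,
         show (y:ℝ) + s ≤ b by rw [hbdef]; linarith [h3.2]⟩, ?_⟩
      show ((y + s + (y - s))/2, (y + s - (y - s))/2) = (y, s)
      congr 1 <;> ring
  have hCoV : (∫ q in lightCone x t, F (u q.1 q.2))
      = ∫ p in Δ, 2⁻¹ * F (f (chM p)) := by
    have hLM : (⇑chL) = chM := funext chL_apply
    have hder : ∀ p ∈ Δ, HasFDerivWithinAt chM chL Δ p := by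
      intro p _
      rw [← hLM]
      exact chL.hasFDerivAt.hasFDerivWithinAt
    have hinj : Set.InjOn chM Δ := by
      rintro ⟨p1, p2⟩ _ ⟨q1, q2⟩ _ h
      have h1 : (p1 + p2)/2 = (q1 + q2)/2 := congrArg Prod.fst h
      have h2 : (p1 - p2)/2 = (q1 - q2)/2 := congrArg Prod.snd h
      simp only [Prod.mk.injEq]
      constructor <;> linarith
    have hchg := MeasureTheory.integral_image_eq_integral_abs_det_fderiv_smul volume hΔmeas
      hder hinj (fun q : ℝ × ℝ => F (u q.1 q.2))
    rw [himage] at hchg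
    rw [hchg]
    refine MeasureTheory.setIntegral_congr_fun hΔmeas (fun p _ => ?_)
    rw [chL_det]
    norm_num; rfl
  have hFub : (∫ p in Δ, F (f (chM p))) = ∫ ξ in a..b, (∫ η in a..ξ, F (f (chM (ξ, η)))) := by
    set h : ℝ × ℝ → ℝ := fun p => F (f (chM p)) with hhdef
    have hind : Integrable (Δ.indicator h) (volume : Measure (ℝ × ℝ)) :=
      (integrable_indicator_iff hΔmeas).mpr hhint
    have h1 : (∫ p in Δ, h p) = ∫ p : ℝ × ℝ, Δ.indicator h p := (integral_indicator hΔmeas).symm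
    have h2 : (∫ p : ℝ × ℝ, Δ.indicator h p) = ∫ ξ : ℝ, ∫ η : ℝ, Δ.indicator h (ξ, η) :=
      MeasureTheory.integral_prod _ hind
    have h3 : ∀ ξ : ℝ, (∫ η : ℝ, Δ.indicator h (ξ, η))
        = (Set.Icc a b).indicator (fun ξ' => ∫ η in a..ξ', h (ξ', η)) ξ := by
      intro ξ
      by_cases hξ : ξ ∈ Set.Icc a b
      · rw [Set.indicator_of_mem hξ]
        have heq : (fun η => Δ.indicator h (ξ, η)) = (Set.Icc a ξ).indicator (fun η => h (ξ, η)) := by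
          funext η
          by_cases hη : η ∈ Set.Icc a ξ
          · rw [Set.indicator_of_mem hη, Set.indicator_of_mem]
            exact ⟨hη.1, hη.2, hξ.2⟩
          · rw [Set.indicator_of_notMem hη, Set.indicator_of_notMem]
            intro hmem
            exact hη ⟨hmem.1, hmem.2.1⟩
        rw [heq, integral_indicator measurableSet_Icc, integral_Icc_eq_integral_Ioc,
          ← intervalIntegral.integral_of_le hξ.1]
      · rw [Set.indicator_of_notMem hξ]
        have heq : (fun η => Δ.indicator h (ξ, η)) = fun _ => (0:ℝ) := by
          funext η
          rw [Set.indicator_of_notMem]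
          rintro ⟨hm1, hm2, hm3⟩
          exact hξ ⟨le_trans hm1 hm2, hm3⟩
        rw [heq, integral_zero]
    calc (∫ p in Δ, h p) = ∫ ξ : ℝ, ∫ η : ℝ, Δ.indicator h (ξ, η) := by rw [← h2, ← h1]
      _ = ∫ ξ : ℝ, (Set.Icc a b).indicator (fun ξ' => ∫ η in a..ξ', h (ξ', η)) ξ := by
          congr 1; funext ξ; exact h3 ξ
      _ = ∫ ξ in Set.Icc a b, ∫ η in a..ξ, h (ξ, η) := integral_indicator measurableSet_Icc
      _ = ∫ ξ in a..b, ∫ η in a..ξ, h (ξ, η) := by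
          rw [integral_Icc_eq_integral_Ioc, ← intervalIntegral.integral_of_le hab]
  have hconeInt : (∫ q in lightCone x t, F (u q.1 q.2))
      = 2⁻¹ * (4 * (u x t - φ a) - 2 * ((φ b - φ a) + ∫ y in a..b, ψ y)) := by
    rw [hCoV, MeasureTheory.integral_const_mul, hFub, key4]
  rw [hconeInt]
  ring
end

section
/- Let F(z) = Σ_{k≥0} a_k z^k with Σ_{k≥0}|a_k| < ∞ on |z| ≤ 1, and let (p_k)_{k≥0} be a probability distribution on the nonnegative integers such that p_k > 0 whenever a_k ≠ 0, p_0 > 0, and Σ_{k≥1} k p_k ≤ 1. Set b_k = a_k/p_k if p_k ≠ 0 and b_k = 0 otherwise, and w(x,t) = v(x,t)/p_0. Let T > 0 and let u be a mild solution of □u = F(u) on [0,T) with |u| ≤ 1. Fix (x,t) ∈ ℝ × (0,T), let (ξ,τ) be a random point uniformly distributed in Δ(x,t) and let κ be an independent random variable with distribution (p_k). Then u(x,t) = 𝔼[ (w(x,t) + (t²/2) b_0) · 1_{κ=0} + (t²/2) b_κ u(ξ,τ)^κ · 1_{κ≥1} ]; equivalently, u(x,t) = p_0 (w(x,t) + (t²/2)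 b_0) + Σ_{k≥1} p_k (t²/2) b_k ∫ u(y,s)^k dμ_{x,t}(y,s), where μ_{x,t} is the uniform probability measure on Δ(x,t). -/
open MeasureTheory Set

/-- The uniform probability measure on `Δ(x,t)`. -/
noncomputable def uniformCone (x t : ℝ) : MeasureTheory.Measure (ℝ × ℝ) :=
  (ENNReal.ofReal (t ^ 2))⁻¹ • (MeasureTheory.volume.restrict (lightCone x t))

lemma lightCone_isClosed (x t : ℝ) : IsClosed (lightCone x t) := by
  have : lightCone x t = {q : ℝ × ℝ | 0 ≤ q.2} ∩ ({q : ℝ × ℝ | q.2 ≤ t} ∩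
      {q : ℝ × ℝ | |q.1 - x| ≤ t - q.2}) := by
    ext q; simp [lightCone, and_assoc]
  rw [this]
  refine (isClosed_le continuous_const continuous_snd).inter
    ((isClosed_le continuous_snd continuous_const).inter
      (isClosed_le ?_ ?_))
  · exact ((continuous_fst.sub continuous_const).abs)
  · exact (continuous_const.sub continuous_snd)

lemma lightCone_measurableSet (x t : ℝ) : MeasurableSet (lightCone x t) :=
  (lightCone_isClosed x t).measurableSet

open intervalIntegral in
lemma my_integral_id (a b : ℝ) : ∫ x in a..b, x = (b ^ 2 - a ^ 2) / 2 := integral_id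

open intervalIntegral in
lemma my_intervalIntegrable_id (a b : ℝ) : IntervalIntegrable (fun x : ℝ => x) volume a b :=
  intervalIntegrable_id

lemma lightCone_volume (x t : ℝ) (ht : 0 < t) :
    volume (lightCone x t) = ENNReal.ofReal (t ^ 2) := by
  have hms := lightCone_measurableSet x t
  rw [Measure.volume_eq_prod, Measure.prod_apply hms]
  have hslice : ∀ y : ℝ, Prod.mk y ⁻¹' lightCone x t = Icc 0 (t - |y - x|) := by
    intro y
    ext s
    simp only [mem_preimage, lightCone, mem_setOf_eq, mem_Icc]
    constructor
    · rintro ⟨h1, h2, h3⟩; exact ⟨h1, by linarith⟩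
    · rintro ⟨h1, h2⟩
      have := abs_nonneg (y - x)
      exact ⟨h1, by linarith, by linarith⟩
  simp_rw [hslice, Real.volume_Icc, sub_zero]
  have hsupp : Function.support (fun y : ℝ => ENNReal.ofReal (t - |y - x|)) ⊆
      Icc (x - t) (x + t) := by
    intro y hy
    simp only [Function.mem_support, ne_eq, ENNReal.ofReal_eq_zero, not_le] at hy
    have : |y - x| < t := by linarith
    rw [abs_lt] at this
    exact ⟨by linarith [this.1], by linarith [this.2]⟩
  rw [← setLIntegral_eq_of_support_subset hsupp]
  have hcont : Continuous (fun y : ℝ => t - |y - x|) :=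
    continuous_const.sub ((continuous_id.sub continuous_const).abs)
  have hint : IntegrableOn (fun y : ℝ => t - |y - x|) (Icc (x - t) (x + t)) :=
    hcont.integrableOn_Icc
  have hnn : 0 ≤ᵐ[volume.restrict (Icc (x - t) (x + t))] fun y : ℝ => t - |y - x| := by
    refine (ae_restrict_iff' measurableSet_Icc).2 (ae_of_all _ fun y hy => ?_)
    rw [mem_Icc] at hy
    have : |y - x| ≤ t := abs_le.2 ⟨by linarith [hy.1], by linarith [hy.2]⟩
    simp only [Pi.zero_apply]
    linarith
  rw [← ofReal_integral_eq_lintegral_ofReal hint hnn]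
  congr 1
  rw [integral_Icc_eq_integral_Ioc, ← intervalIntegral.integral_of_le (by linarith : x - t ≤ x + t)]
  have hsub : (∫ y in (x - t)..(x + t), (t - |y - x|)) = ∫ z in (-t)..t, (t - |z|) := by
    have := intervalIntegral.integral_comp_sub_right (a := x - t) (b := x + t)
      (fun z => t - |z|) x
    simpa using this
  rw [hsub]
  have hi1 : (∫ z in (0:ℝ)..t, (t - |z|)) = t ^ 2 / 2 := by
    have : (∫ z in (0:ℝ)..t, (t - |z|)) = ∫ z in (0:ℝ)..t, (t - z) := by
      refine intervalIntegral.integral_congr fun z hz => ?_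
      rw [uIcc_of_le ht.le] at hz
      rw [abs_of_nonneg hz.1]
    rw [this, intervalIntegral.integral_sub intervalIntegrable_const
      (my_intervalIntegrable_id _ _)]
    simp [my_integral_id]
    ring
  have hi2 : (∫ z in (-t)..(0:ℝ), (t - |z|)) = t ^ 2 / 2 := by
    have : (∫ z in (-t)..(0:ℝ), (t - |z|)) = ∫ z in (-t)..(0:ℝ), (t + z) := by
      refine intervalIntegral.integral_congr fun z hz => ?_
      rw [uIcc_of_le (by linarith : -t ≤ (0:ℝ))] at hz
      rw [abs_of_nonpos hz.2]; ring
    rw [this, intervalIntegral.integral_add intervalIntegrable_const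
      (my_intervalIntegrable_id _ _)]
    simp [my_integral_id]
    ring
  have hsplit : (∫ z in (-t)..t, (t - |z|)) =
      (∫ z in (-t)..(0:ℝ), (t - |z|)) + ∫ z in (0:ℝ)..t, (t - |z|) := by
    refine (intervalIntegral.integral_add_adjacent_intervals ?_ ?_).symm
    · exact (continuous_const.sub continuous_abs).intervalIntegrable _ _
    · exact (continuous_const.sub continuous_abs).intervalIntegrable _ _
  rw [hsplit, hi1, hi2]; ring

/-- Lemma 1 of the paper, the one-step cascade identity:
`u(x,t) = 𝔼[(w(x,t) + (t²/2)b₀)1_{κ=0} + (t²/2) b_κ u(ξ,τ)^κ 1_{κ≥1}]`, i.e.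
`u(x,t) = p₀(w(x,t) + (t²/2)b₀) + Σ_{k≥1} p_k (t²/2) b_k ∫ u^k dμ_{x,t}`. -/
theorem one_step_cascade_identity
    (a : ℕ → ℝ) (ha : Summable fun k => |a k|)
    (F : ℝ → ℝ) (hFdef : ∀ z : ℝ, |z| ≤ 1 → F z = ∑' k : ℕ, a k * z ^ k)
    (p : ℕ → ℝ) (hpnn : ∀ k, 0 ≤ p k) (hpsum : HasSum p 1)
    (hp0 : 0 < p 0) (hppos : ∀ k, a k ≠ 0 → 0 < p k)
    (hmean : Summable fun k : ℕ => (k : ℝ) * p k)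
    (hmean1 : (∑' k : ℕ, (k : ℝ) * p k) ≤ 1)
    (b : ℕ → ℝ) (hb : ∀ k, b k = if p k ≠ 0 then a k / p k else 0)
    (φ ψ : ℝ → ℝ) (v w : ℝ → ℝ → ℝ)
    (hv : ∀ x t : ℝ, v x t =
      (1 / 2) * (∫ y in (x - t)..(x + t), ψ y) + (1 / 2) * (φ (x + t) + φ (x - t)))
    (hw : ∀ x t : ℝ, w x t = v x t / p 0)
    (T : ℝ) (hT : 0 < T)
    (u : ℝ → ℝ → ℝ) (hmeas : Measurable (fun q : ℝ × ℝ => u q.1 q.2))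
    (hub : ∀ x t : ℝ, 0 ≤ t → t < T → |u x t| ≤ 1)
    (hmild : ∀ x t : ℝ, 0 ≤ t → t < T →
      u x t = v x t + (1 / 2) * (∫ q in lightCone x t, F (u q.1 q.2)))
    (x t : ℝ) (ht : 0 < t) (htT : t < T) :
    u x t = p 0 * (w x t + t ^ 2 / 2 * b 0) +
      ∑' k : ℕ, p (k + 1) * (t ^ 2 / 2) * b (k + 1) *
        ∫ q, (u q.1 q.2) ^ (k + 1) ∂(uniformCone x t) := by
  have hCmeas : MeasurableSet (lightCone x t) := lightCone_measurableSet x t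
  have hCvol : volume (lightCone x t) = ENNReal.ofReal (t ^ 2) := lightCone_volume x t ht
  have ht2 : (0:ℝ) < t ^ 2 := by positivity
  have hCvolR : (volume (lightCone x t)).toReal = t ^ 2 := by
    rw [hCvol, ENNReal.toReal_ofReal ht2.le]
  have hCfin : volume (lightCone x t) ≠ ⊤ := by rw [hCvol]; exact ENNReal.ofReal_ne_top
  have hubC : ∀ q ∈ lightCone x t, |u q.1 q.2| ≤ 1 := fun q hq =>
    hub q.1 q.2 hq.1 (lt_of_le_of_lt hq.2.1 htT)
  have hmk : ∀ k : ℕ, Measurable (fun q : ℝ × ℝ => (u q.1 q.2) ^ k) :=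
    fun k => hmeas.pow_const k
  have hintk : ∀ k : ℕ, IntegrableOn (fun q : ℝ × ℝ => (u q.1 q.2) ^ k) (lightCone x t) := by
    intro k
    refine Measure.integrableOn_of_bounded (M := 1) hCfin ((hmk k).aestronglyMeasurable) ?_
    refine (ae_restrict_iff' hCmeas).2 (ae_of_all _ fun q hq => ?_)
    rw [Real.norm_eq_abs, abs_pow]
    exact pow_le_one₀ (abs_nonneg _) (hubC q hq)
  have hnormI : ∀ k : ℕ, (∫ q in lightCone x t, |(u q.1 q.2) ^ k|) ≤ t ^ 2 := by
    intro k
    calc (∫ q in lightCone x t, |(u q.1 q.2) ^ k|)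
        ≤ ∫ _q in lightCone x t, (1:ℝ) := by
          refine setIntegral_mono_on (hintk k).abs
            (integrableOn_const hCfin) hCmeas fun q hq => ?_
          rw [abs_pow]
          exact pow_le_one₀ (abs_nonneg _) (hubC q hq)
      _ = t ^ 2 := by rw [setIntegral_const, measureReal_def, hCvolR, smul_eq_mul, mul_one]
  have hIb : ∀ k : ℕ, |∫ q in lightCone x t, (u q.1 q.2) ^ k| ≤ t ^ 2 := by
    intro k
    refine le_trans ?_ (hnormI k)
    simpa [Real.norm_eq_abs] using
      norm_integral_le_integral_norm (μ := volume.restrict (lightCone x t))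
        (fun q : ℝ × ℝ => (u q.1 q.2) ^ k)
  have hI0 : (∫ q in lightCone x t, (u q.1 q.2) ^ 0) = t ^ 2 := by
    simp only [pow_zero]
    rw [setIntegral_const, measureReal_def, hCvolR, smul_eq_mul, mul_one]
  -- swap integral and sum
  have hInts : ∀ k : ℕ, Integrable (fun q : ℝ × ℝ => a k * (u q.1 q.2) ^ k)
      (volume.restrict (lightCone x t)) := fun k => (hintk k).const_mul _
  have hSum : Summable fun k : ℕ =>
      ∫ q in lightCone x t, ‖a k * (u q.1 q.2) ^ k‖ := by
    refine Summable.of_nonneg_of_le (fun k => integral_nonneg fun q => norm_nonneg _)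
      (fun k => ?_) (ha.mul_right (t ^ 2))
    have : (∫ q in lightCone x t, ‖a k * (u q.1 q.2) ^ k‖)
        = |a k| * ∫ q in lightCone x t, |(u q.1 q.2) ^ k| := by
      simp_rw [norm_mul, Real.norm_eq_abs]
      exact integral_const_mul _ _
    rw [this]
    exact mul_le_mul_of_nonneg_left (hnormI k) (abs_nonneg _)
  have hswap : (∫ q in lightCone x t, ∑' k : ℕ, a k * (u q.1 q.2) ^ k)
      = ∑' k : ℕ, a k * ∫ q in lightCone x t, (u q.1 q.2) ^ k := by
    rw [← integral_tsum_of_summable_integral_norm hInts hSum]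
    exact tsum_congr fun k => integral_const_mul _ _
  have hFeq : (∫ q in lightCone x t, F (u q.1 q.2))
      = ∫ q in lightCone x t, ∑' k : ℕ, a k * (u q.1 q.2) ^ k :=
    setIntegral_congr_fun hCmeas fun q hq => hFdef _ (hubC q hq)
  have hsummable : Summable fun k : ℕ => a k * ∫ q in lightCone x t, (u q.1 q.2) ^ k := by
    refine Summable.of_norm (Summable.of_nonneg_of_le (fun k => norm_nonneg _)
      (fun k => ?_) (ha.mul_right (t ^ 2)))
    rw [norm_mul, Real.norm_eq_abs, Real.norm_eq_abs]
    exact mul_le_mul_of_nonneg_left (hIb k) (abs_nonneg _)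
  have hsplit : (∑' k : ℕ, a k * ∫ q in lightCone x t, (u q.1 q.2) ^ k)
      = a 0 * t ^ 2 + ∑' k : ℕ, a (k + 1) * ∫ q in lightCone x t, (u q.1 q.2) ^ (k + 1) := by
    rw [hsummable.tsum_eq_zero_add, hI0]
  -- identify each term of the goal's series
  have hterm : ∀ k : ℕ, p (k + 1) * (t ^ 2 / 2) * b (k + 1) *
      (∫ q, (u q.1 q.2) ^ (k + 1) ∂(uniformCone x t))
      = (1 / 2) * (a (k + 1) * ∫ q in lightCone x t, (u q.1 q.2) ^ (k + 1)) := by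
    intro k
    have hμ : (∫ q, (u q.1 q.2) ^ (k + 1) ∂(uniformCone x t))
        = (t ^ 2)⁻¹ * ∫ q in lightCone x t, (u q.1 q.2) ^ (k + 1) := by
      rw [uniformCone, integral_smul_measure, ENNReal.toReal_inv,
        ENNReal.toReal_ofReal ht2.le, smul_eq_mul]
    rw [hμ, hb]
    by_cases hp : p (k + 1) = 0
    · have ha0 : a (k + 1) = 0 := by
        by_contra h
        exact absurd (hppos _ h) (by simp [hp])
      simp [hp, ha0]
    · rw [if_pos hp]
      field_simp
  calc u x t = v x t + (1 / 2) * (a 0 * t ^ 2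
        + ∑' k : ℕ, a (k + 1) * ∫ q in lightCone x t, (u q.1 q.2) ^ (k + 1)) := by
        rw [hmild x t ht.le htT, hFeq, hswap, hsplit]
    _ = p 0 * (w x t + t ^ 2 / 2 * b 0) +
        ∑' k : ℕ, p (k + 1) * (t ^ 2 / 2) * b (k + 1) *
          ∫ q, (u q.1 q.2) ^ (k + 1) ∂(uniformCone x t) := by
        rw [tsum_congr hterm, tsum_mul_left, hw, hb 0, if_pos hp0.ne']
        field_simp
        ring
end
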